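/- arXiv:2509.21654 — 4 statements merged into one kernel-verified Lean document; each statement's English description precedes it below -/
import Mathlib

section
/- For every total computable function A : ℕ → Option Bool such that (i) for all p and i, A (Nat.pair p i) = some true implies (eval (code p) i).Dom (the program denoted by p halts on input i), and (ii) for all p and i, A (Nat.pair p i) = some false implies ¬(eval (code p) i).Dom, there exists a natural number p such that (eval (code p) p).Dom (the program denoted by p halts on its own code as input), yet A (Nat.pair p p) ≠ some true (the system never outputs 'halts' on this instance). -/
open Nat.Partrec (Code)

/-- Any total computable (well-behaved) system `A : ℕ → Option Bool` that is safe
for the halting problem on specific program-input instances -- `some true` only on halting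
instances and `some false` only on diverging instances -- must fail to certify some genuinely
halting self-referential instance: there is a `p` with `eval (code p) p` halting, yet
`A (Nat.pair p p) ≠ some true`. -/
theorem safe_wellbehaved_not_agi_halting_specific
    (A : ℕ → Option Bool) (hA : Computable A)
    (hSafeTrue : ∀ p i : ℕ, A (Nat.pair p i) = some true →
      ((Denumerable.ofNat Code p).eval i).Dom)
    (hSafeFalse : ∀ p i : ℕ, A (Nat.pair p i) = some false →
      ¬ ((Denumerable.ofNat Code p).eval i).Dom) :
    ∃ p : ℕ, ((Denumerable.ofNat Code p).eval p).Dom ∧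
      A (Nat.pair p p) ≠ some true := by
  -- diagonal partial function
  set f : ℕ →. ℕ := fun n =>
    cond (A (Nat.pair n n) = some true : Bool) Part.none (Part.some 0) with hf
  have hfp : Partrec f := by
    apply Partrec.cond
    · exact (Primrec.eq.comp Primrec.id (Primrec.const (some true))).decide.to_comp.comp
        (hA.comp (Primrec₂.natPair.to_comp.comp Computable.id Computable.id))
    · exact Partrec.none
    · exact Computable.const 0
  obtain ⟨c, hc⟩ := Nat.Partrec.Code.exists_code.mp hfp
  refine ⟨Encodable.encode c, ?_⟩
  rw [Denumerable.ofNat_encode, hc]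
  set p := Encodable.encode c
  by_cases h : A (Nat.pair p p) = some true
  · exfalso
    have := hSafeTrue p p h
    rw [Denumerable.ofNat_encode, hc] at this
    simp [hf, h] at this
  · constructor
    · simp only [hf]
      simp [h]
    · exact h
end

section
/- For every partial recursive function A : ℕ →. Bool such that for all natural numbers f, u, v: (i) whenever true ∈ A (Nat.pair f (Nat.pair u v)), the state v is reachable from the state u under the step relation of the code denoted by f (i.e., Relation.ReflTransGen (fun a b => b ∈ eval (code f) a) u v holds), and (ii) whenever false ∈ A (Nat.pair f (Nat.pair u v)), the state v is not reachable from u under that step relation, there exist natural numbers f, u, v such that the code denoted by f computes a total function, v is not reachable from u under the step relation of the code denoted by f, yet false ∉ A (Nat.pair f (Nat.pair u v)) (the system never outputs 'not reachable' on this planning instance). -/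
open Nat.Partrec (Code)
open Nat.Partrec.Code

private def planG (p : ℕ) : ℕ :=
  if (evaln p.unpair.2 (Denumerable.ofNat Code p.unpair.1) 17).isSome then 0
  else p.unpair.2 + 1

private lemma planG_primrec : Primrec planG := by
  have h1 : Primrec fun p : ℕ =>
      (evaln p.unpair.2 (Denumerable.ofNat Code p.unpair.1) 17) :=
    primrec_evaln.comp <|
      (((Primrec.snd.comp Primrec.unpair)).pair
        ((Primrec.ofNat Code).comp (Primrec.fst.comp Primrec.unpair))).pair (Primrec.const 17)
  have h2 : Primrec fun p : ℕ => p.unpair.2 + 1 :=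
    Primrec.succ.comp (Primrec.snd.comp Primrec.unpair)
  exact (Primrec.cond (Primrec.option_isSome.comp h1) (Primrec.const 0) h2).of_eq fun p => by
    unfold planG; by_cases h : (evaln p.unpair.2 (Denumerable.ofNat Code p.unpair.1) 17).isSome <;>
      simp [h]

/-- Any partial recursive system `A` that is safe for planning -- on an encoded
instance `Nat.pair f (Nat.pair u v)` it outputs `true` only if state `v` is reachable from
state `u` under the step relation of the code denoted by `f`, and `false` only if `v` is not
reachable from `u` -- must abstain on some unreachable instance whose transition program is
total: there are `f, u, v` with the code of `f` total and `v` not reachable from `u`, yet `A`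
never outputs `false` ('not reachable') on this instance. -/
theorem safe_trusted_not_agi_planning
    (A : ℕ →. Bool) (hA : Partrec A)
    (hSafeTrue : ∀ f u v : ℕ, true ∈ A (Nat.pair f (Nat.pair u v)) →
      Relation.ReflTransGen (fun a b => b ∈ (Denumerable.ofNat Code f).eval a) u v)
    (hSafeFalse : ∀ f u v : ℕ, false ∈ A (Nat.pair f (Nat.pair u v)) →
      ¬ Relation.ReflTransGen (fun a b => b ∈ (Denumerable.ofNat Code f).eval a) u v) :
    ∃ f u v : ℕ,
      (∀ n : ℕ, ((Denumerable.ofNat Code f).eval n).Dom) ∧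
      ¬ Relation.ReflTransGen (fun a b => b ∈ (Denumerable.ofNat Code f).eval a) u v ∧
      false ∉ A (Nat.pair f (Nat.pair u v)) := by
  by_contra hcon
  push_neg at hcon
  -- hcon : ∀ f u v, total → unreachable → false ∈ A (pair f (pair u v))
  obtain ⟨c, hc⟩ : ∃ c : Code, eval c = (planG : ℕ →. ℕ) :=
    exists_code.1 (Partrec.nat_iff.1 planG_primrec.to_comp.partrec)
  obtain ⟨s, hs_comp, hs⟩ := smn
  -- the parametrized code
  set F : Code → ℕ := fun d => Encodable.encode (s c (Encodable.encode d)) with hF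
  have hevalF : ∀ (d : Code) (a : ℕ),
      (Denumerable.ofNat Code (F d)).eval a =
        Part.some (planG (Nat.pair (Encodable.encode d) a)) := by
    intro d a
    simp only [hF, Denumerable.ofNat_encode]
    rw [hs, hc]; rfl
  have hstep : ∀ (d : Code) (a b : ℕ),
      (b ∈ (Denumerable.ofNat Code (F d)).eval a) ↔
        b = planG (Nat.pair (Encodable.encode d) a) := by
    intro d a b; rw [hevalF]; exact Part.mem_some_iff
  have hG : ∀ (d : Code) (a : ℕ),
      planG (Nat.pair (Encodable.encode d) a) =
        if (evaln a d 17).isSome then 0 else a + 1 := by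
    intro d a
    simp [planG, Nat.unpair_pair, Denumerable.ofNat_encode]
  have htotal : ∀ (d : Code) (n : ℕ), ((Denumerable.ofNat Code (F d)).eval n).Dom := by
    intro d n; rw [hevalF]; trivial
  -- unreachable when d does not halt on 17
  have hunreach : ∀ d : Code, ¬ (eval d 17).Dom →
      ¬ Relation.ReflTransGen
        (fun a b => b ∈ (Denumerable.ofNat Code (F d)).eval a) 1 0 := by
    intro d hdom hreach
    rcases Relation.ReflTransGen.cases_tail hreach with h | ⟨a, _, hstep'⟩
    · exact absurd h (by norm_num)
    · rw [hstep, hG] at hstep'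
      by_cases h : (evaln a d 17).isSome
      · rcases Option.isSome_iff_exists.1 h with ⟨y, hy⟩
        exact hdom (Part.dom_iff_mem.2 ⟨y, evaln_sound (Option.mem_def.2 hy)⟩)
      · rw [if_neg h] at hstep'; exact absurd hstep' (by omega)
  -- reachable when d halts on 17
  have hreach : ∀ d : Code, (eval d 17).Dom →
      Relation.ReflTransGen
        (fun a b => b ∈ (Denumerable.ofNat Code (F d)).eval a) 1 0 := by
    intro d hdom
    obtain ⟨y, hy⟩ := Part.dom_iff_mem.1 hdom
    obtain ⟨k, hk⟩ := evaln_complete.1 hy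
    set R := fun a b => b ∈ (Denumerable.ofNat Code (F d)).eval a with hR
    have key : ∀ n : ℕ, Relation.ReflTransGen R 1 0 ∨ Relation.ReflTransGen R 1 (n + 1) := by
      intro n
      induction n with
      | zero => exact Or.inr .refl
      | succ m ih =>
        rcases ih with h | h
        · exact Or.inl h
        · by_cases hsome : (evaln (m + 1) d 17).isSome
          · exact Or.inl (h.tail ((hstep d _ _).2 (by rw [hG, if_pos hsome])))
          · exact Or.inr (h.tail ((hstep d _ _).2 (by rw [hG, if_neg hsome])))
    rcases key k with h | h
    · exact h
    · have hsome : (evaln (k + 1) d 17).isSome :=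
        Option.isSome_iff_exists.2 ⟨y, evaln_mono (Nat.le_succ k) hk⟩
      exact h.tail ((hstep d _ _).2 (by rw [hG, if_pos hsome]))
  -- the key equivalence
  have hiff : ∀ d : Code,
      false ∈ A (Nat.pair (F d) (Nat.pair 1 0)) ↔ ¬ (eval d 17).Dom := by
    intro d
    constructor
    · intro hfalse hdom
      exact hSafeFalse (F d) 1 0 hfalse (hreach d hdom)
    · intro hdom
      exact hcon (F d) 1 0 (htotal d) (hunreach d hdom)
  -- build the partial recursive verifier for the complement of halting
  have hm : Computable fun d : Code => Nat.pair (F d) (Nat.pair 1 0) :=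
    Primrec₂.natPair.to_comp.comp
      (Computable.encode.comp (hs_comp.comp (Computable.const c) Computable.encode))
      (Computable.const (Nat.pair 1 0))
  have hB : Partrec fun d : Code =>
      (A (Nat.pair (F d) (Nat.pair 1 0))).bind fun b =>
        cond b Part.none (Part.some ()) := by
    refine (hA.comp hm).bind ?_
    exact (Partrec.cond (Computable.snd) Partrec.none
      ((Computable.const ()).partrec)).to₂
  have hre : REPred fun d : Code => ¬ (eval d 17).Dom := by
    refine hB.of_eq fun d => Part.ext fun x => ?_
    cases x
    simp only [Part.mem_bind_iff, Part.mem_assert_iff, Part.mem_some_iff]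
    constructor
    · rintro ⟨b, hb, hb2⟩
      cases b
      · exact ⟨(hiff d).1 hb, by simp⟩
      · simp at hb2
    · rintro ⟨hdom, -⟩
      exact ⟨false, (hiff d).2 hdom, by simp⟩
  exact ComputablePred.halting_problem_not_re 17 hre
end

section
/- For every total computable function A : ℕ → Option Bool such that for all natural numbers f, u, v: (i) A (Nat.pair f (Nat.pair u v)) = some true implies the state v is reachable from the state u under the step relation of the code denoted by f (i.e., Relation.ReflTransGen (fun a b => b ∈ eval (code f) a) u v holds), and (ii) A (Nat.pair f (Nat.pair u v)) = some false implies v is not reachable from u under that relation, there exist natural numbers f, u, v such that the code denoted by f computes a total function, v is reachable from u under the step relation of the code denoted by f, yet A (Nat.pair f (Nat.pair u v)) ≠ some true (the system never reports that a feasible plan exists for this instance). -/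
open Nat.Partrec (Code)

/-- Any total computable (well-behaved) system `A : ℕ → Option Bool` that is safe
for planning -- `some true` only on instances where the goal `v` is reachable from the start
`u` under the step relation of the code denoted by `f`, and `some false` only on instances
where it is not -- must fail to report a feasible plan on some reachable instance with a total
transition program: there are `f, u, v` with the code of `f` total and `v` reachable from `u`,
yet `A (Nat.pair f (Nat.pair u v)) ≠ some true`. -/
theorem safe_wellbehaved_not_agi_planning_feasible
    (A : ℕ → Option Bool) (hA : Computable A)
    (hSafeTrue : ∀ f u v : ℕ, A (Nat.pair f (Nat.pair u v)) = some true →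
      Relation.ReflTransGen (fun a b => b ∈ (Denumerable.ofNat Code f).eval a) u v)
    (hSafeFalse : ∀ f u v : ℕ, A (Nat.pair f (Nat.pair u v)) = some false →
      ¬ Relation.ReflTransGen (fun a b => b ∈ (Denumerable.ofNat Code f).eval a) u v) :
    ∃ f u v : ℕ,
      (∀ n : ℕ, ((Denumerable.ofNat Code f).eval n).Dom) ∧
      Relation.ReflTransGen (fun a b => b ∈ (Denumerable.ofNat Code f).eval a) u v ∧
      A (Nat.pair f (Nat.pair u v)) ≠ some true := by
  -- the diagonal function
  set g : ℕ → ℕ → ℕ := fun e n =>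
    if A (Nat.pair e (Nat.pair 0 1)) = some true then 0 else n + 1 with hgdef
  have hg : Computable₂ g := by
    have hcond : Computable fun p : ℕ × ℕ =>
        decide (A (Nat.pair p.1 (Nat.pair 0 1)) = some true) := by
      have h1 : Computable fun p : ℕ × ℕ => A (Nat.pair p.1 (Nat.pair 0 1)) :=
        hA.comp ((Primrec₂.natPair.comp Primrec.fst
          (Primrec.const (Nat.pair 0 1))).to_comp)
      exact (Primrec.eq (α := Option Bool)).decide.to_comp.comp h1
        (Computable.const (some true))
    have : Computable fun p : ℕ × ℕ =>
        cond (decide (A (Nat.pair p.1 (Nat.pair 0 1)) = some true)) 0 (p.2 + 1) :=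
      Computable.cond hcond (Computable.const 0)
        (Computable.succ.comp Computable.snd)
    refine this.of_eq ?_
    rintro ⟨e, n⟩
    by_cases h : A (Nat.pair e (Nat.pair 0 1)) = some true <;> simp [hgdef, h]
  have hG : Computable₂ fun (c : Code) (n : ℕ) => g (Encodable.encode c) n :=
    hg.comp (Computable.encode.comp Computable.fst) Computable.snd
  have hF : Partrec₂ fun (c : Code) => ((fun n => g (Encodable.encode c) n : ℕ → ℕ) : ℕ →. ℕ) :=
    hG.partrec₂
  obtain ⟨c, hc⟩ := Nat.Partrec.Code.fixed_point₂ hF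
  refine ⟨Encodable.encode c, 0, 1, ?_, ?_, ?_⟩
  · intro n; simp only [Denumerable.ofNat_encode, hc]; trivial
  · simp only [Denumerable.ofNat_encode, hc]
    by_cases h : A (Nat.pair (Encodable.encode c) (Nat.pair 0 1)) = some true
    · -- safety is violated in this case; derive a contradiction
      exfalso
      have hreach := hSafeTrue _ 0 1 h
      rw [Denumerable.ofNat_encode, hc] at hreach
      have key : ∀ x, Relation.ReflTransGen
          (fun a b => b ∈ ((fun n => g (Encodable.encode c) n : ℕ → ℕ) : ℕ →. ℕ) a) 0 x →
          x = 0 := by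
        intro x hx
        induction hx with
        | refl => rfl
        | tail _ hstep ih =>
          simp only [PFun.coe_val, Part.mem_some_iff] at hstep
          subst hstep
          simp [hgdef, h]
      exact absurd (key 1 hreach) one_ne_zero
    · exact Relation.ReflTransGen.single (by simp [hgdef, h, PFun.coe_val])
  · intro h
    have hreach := hSafeTrue _ 0 1 h
    rw [Denumerable.ofNat_encode, hc] at hreach
    have key : ∀ x, Relation.ReflTransGen
        (fun a b => b ∈ ((fun n => g (Encodable.encode c) n : ℕ → ℕ) : ℕ →. ℕ) a) 0 x →
        x = 0 := by
      intro x hx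
      induction hx with
      | refl => rfl
      | tail _ hstep ih =>
        simp only [PFun.coe_val, Part.mem_some_iff] at hstep
        subst hstep
        simp [hgdef, h]
    exact absurd (key 1 hreach) one_ne_zero
end

section
/- There exists a constant c : ℕ such that for every code a (for a partial recursive function) and every natural number T, if a is sound for T-step-bounded non-halting in the sense that for all natural numbers p and i, whenever 0 ∈ eval a (Nat.pair p i), the code denoted by p does not halt on input i within T steps (i.e., Nat.Partrec.Code.evaln T (code p) i = none), then there exists a natural number p such that the code denoted by p does not halt on input p within T steps, yet for every k with k + c ≤ T, Nat.Partrec.Code.evaln k a (Nat.pair p p) ≠ some 0 (the system a, run for at most T − c steps, never outputs 'does not halt in the given time limit' on this instance). -/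
open Nat.Partrec (Code)
open Nat.Partrec.Code

private def pairself : Code := Code.id.pair Code.id

private def checker : Code := (Code.rfind' Code.left).comp (Code.id.pair Code.zero)

private def diag (a : Code) : Code := checker.comp (a.comp pairself)

private lemma eval_diag {a : Code} {n x : ℕ} (h : x ∈ (diag a).eval n) :
    0 ∈ a.eval (Nat.pair n n) := by
  simp [diag, checker, pairself, eval, Seq.seq] at h
  obtain ⟨v, hv, w, hw, m, ⟨hv0, -⟩, -⟩ := h
  obtain ⟨k, hk, -⟩ := Nat.rfind_dom.1 hv0
  simp at hk hv
  rw [hk] at hv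
  exact (Part.mem_bind_iff.1 hv).elim fun y ⟨hy, h⟩ => (Part.mem_some_iff.1 hy) ▸ h

private lemma evaln_diag {a : Code} {K n : ℕ}
    (h : evaln (K + 1) a (Nat.pair n n) = some 0) :
    evaln (K + 1) (diag a) n = some 0 := by
  have hb : Nat.pair n n < K + 1 := evaln_bound h
  have hn : n ≤ K := le_trans (Nat.left_le_pair n n) (Nat.lt_succ_iff.mp hb)
  have hpp : Nat.pair n n ≤ K := Nat.lt_succ_iff.mp hb
  have h00 : Nat.pair 0 0 = 0 := rfl
  simp [diag, checker, pairself, Code.id, evaln, hn, hpp, h, h00, Seq.seq]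

/-- There is a constant `c` such that for every code `a` (the AI system) and every
time limit `T`, if `a` is sound for `T`-step-bounded non-halting (whenever `0 ∈ eval a
(Nat.pair p i)`, the code denoted by `p` does not halt on `i` within `T` steps), then there is
a `p` whose code does not halt on input `p` within `T` steps, yet `a`, run for any time budget
`k` with `k + c ≤ T`, never outputs `0` ('does not halt in the given time limit') on the
instance `Nat.pair p p`. -/
theorem safe_trusted_not_agi_time_bounded_halting :
    ∃ c : ℕ, ∀ (a : Code) (T : ℕ),
      (∀ p i : ℕ, 0 ∈ a.eval (Nat.pair p i) →
        Nat.Partrec.Code.evaln T (Denumerable.ofNat Code p) i = none) →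
      ∃ p : ℕ,
        Nat.Partrec.Code.evaln T (Denumerable.ofNat Code p) p = none ∧
        ∀ k : ℕ, k + c ≤ T →
          Nat.Partrec.Code.evaln k a (Nat.pair p p) ≠ some 0 := by
  refine ⟨0, fun a T hsound => ?_⟩
  set p : ℕ := Encodable.encode (diag a) with hp
  have hofnat : Denumerable.ofNat Code p = diag a := Denumerable.ofNat_encode _
  refine ⟨p, ?_, ?_⟩
  · rw [hofnat]
    cases he : evaln T (diag a) p with
    | none => rfl
    | some x =>
      have hx : x ∈ (diag a).eval p := evaln_sound he
      have h0 : 0 ∈ a.eval (Nat.pair p p) := eval_diag hx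
      have := hsound p p h0
      rw [hofnat] at this
      rw [this] at he
      exact absurd he (by simp)
  · intro k hk hke
    cases k with
    | zero => simp [evaln] at hke
    | succ K =>
      have h0 : 0 ∈ a.eval (Nat.pair p p) := evaln_sound hke
      have hnone := hsound p p h0
      rw [hofnat] at hnone
      have hsome : evaln (K + 1) (diag a) p = some 0 := evaln_diag hke
      have : (0 : ℕ) ∈ evaln T (diag a) p :=
        evaln_mono (by omega) hsome
      rw [hnone] at this
      exact absurd this (by simp)
end
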